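/- arXiv:1012.4890 — 2 statements merged into one kernel-verified Lean document; each statement's English description precedes it below -/
import Mathlib

section
/- If the disagreement set ds π π' is empty, then for every nominal term t, π • t is weakly equivalent to π' • t (written π • t ∼ π' • t). -/
abbrev Atom := ℕ
abbrev Var := ℕ
abbrev Perm := List (Atom × Atom)

def swap (p : Atom × Atom) (a : Atom) : Atom :=
  if a = p.1 then p.2 else if a = p.2 then p.1 else a

def permAtom : Perm → Atom → Atom
  | [], a => a
  | p :: π, a => swap p (permAtom π a)

def ds (π π' : Perm) : Set Atom := {a | permAtom π a ≠ permAtom π' a}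

inductive Trm : Type
  | unit : Trm
  | pair : Trm → Trm → Trm
  | fn : ℕ → Trm → Trm
  | atom : Atom → Trm
  | abs : Atom → Trm → Trm
  | susp : Perm → Var → Trm

def permTrm (π : Perm) : Trm → Trm
  | .unit => .unit
  | .pair t₁ t₂ => .pair (permTrm π t₁) (permTrm π t₂)
  | .fn f t => .fn f (permTrm π t)
  | .atom a => .atom (permAtom π a)
  | .abs a t => .abs (permAtom π a) (permTrm π t)
  | .susp π' X => .susp (π ++ π') X

abbrev Env := Set (Atom × Var)

inductive fresh (Γ : Env) (a : Atom) : Trm → Prop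
  | unit : fresh Γ a .unit
  | pair {t₁ t₂} : fresh Γ a t₁ → fresh Γ a t₂ → fresh Γ a (.pair t₁ t₂)
  | fn {f t} : fresh Γ a t → fresh Γ a (.fn f t)
  | abs₁ {t} : fresh Γ a (.abs a t)
  | abs₂ {b t} : a ≠ b → fresh Γ a t → fresh Γ a (.abs b t)
  | atom {b} : a ≠ b → fresh Γ a (.atom b)
  | susp {π X} : (permAtom π.reverse a, X) ∈ Γ → fresh Γ a (.susp π X)

inductive equ (Γ : Env) : Trm → Trm → Prop
  | unit : equ Γ .unit .unit
  | pair {t₁ t₂ s₁ s₂} : equ Γ t₁ t₂ → equ Γ s₁ s₂ → equ Γ (.pair t₁ s₁) (.pair t₂ s₂)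
  | fn {f t₁ t₂} : equ Γ t₁ t₂ → equ Γ (.fn f t₁) (.fn f t₂)
  | abs₁ {a t₁ t₂} : equ Γ t₁ t₂ → equ Γ (.abs a t₁) (.abs a t₂)
  | abs₂ {a b t₁ t₂} : a ≠ b → fresh Γ a t₂ → equ Γ t₁ (permTrm [(a, b)] t₂) →
      equ Γ (.abs a t₁) (.abs b t₂)
  | atom {a} : equ Γ (.atom a) (.atom a)
  | susp {π π' X} : (∀ c ∈ ds π π', (c, X) ∈ Γ) → equ Γ (.susp π X) (.susp π' X)

inductive weak : Trm → Trm → Prop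
  | unit : weak .unit .unit
  | atom {a} : weak (.atom a) (.atom a)
  | fn {f t t'} : weak t t' → weak (.fn f t) (.fn f t')
  | pair {t₁ t₂ s₁ s₂} : weak t₁ s₁ → weak t₂ s₂ → weak (.pair t₁ t₂) (.pair s₁ s₂)
  | abs {a t t'} : weak t t' → weak (.abs a t) (.abs a t')
  | susp {π π' X} : ds π π' = ∅ → weak (.susp π X) (.susp π' X)

def subst (σ : Var → Option Trm) : Trm → Trm
  | .unit => .unit
  | .pair t₁ t₂ => .pair (subst σ t₁) (subst σ t₂)
  | .fn f t => .fn f (subst σ t)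
  | .atom a => .atom a
  | .abs a t => .abs a (subst σ t)
  | .susp π X =>
      match σ X with
      | some t => permTrm π t
      | none => .susp π X

lemma permAtom_append (π π' : Perm) (a : Atom) :
    permAtom (π ++ π') a = permAtom π (permAtom π' a) := by
  induction π with
  | nil => rfl
  | cons p π ih => simp [permAtom, ih]

theorem weak_of_ds_empty (π π' : Perm) (h : ds π π' = ∅) (t : Trm) :
    weak (permTrm π t) (permTrm π' t) := by
  have ha : ∀ a, permAtom π a = permAtom π' a := fun a => by
    by_contra hc
    exact absurd h (by simp [ds, Set.eq_empty_iff_forall_notMem]; exact ⟨a, hc⟩)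
  induction t with
  | unit => exact .unit
  | pair t₁ t₂ ih₁ ih₂ => exact .pair ih₁ ih₂
  | fn f t ih => exact .fn ih
  | atom a => rw [permTrm, permTrm, ha]; exact .atom
  | abs a t ih => rw [permTrm, permTrm, ha]; exact .abs ih
  | susp π'' X =>
      refine .susp ?_
      ext a
      simp [ds, permAtom_append, ha]
end

section
/- If ∇ ⊢ t₁ ≈ t₂ and t₂ ∼ t₃ (weak equivalence), then ∇ ⊢ t₁ ≈ t₃. -/
lemma swap_invol (p : Atom × Atom) (a : Atom) : swap p (swap p a) = a := by
  unfold swap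
  split_ifs <;> simp_all

lemma permAtom_reverse_right (π : Perm) (a : Atom) :
    permAtom π (permAtom π.reverse a) = a := by
  induction π generalizing a with
  | nil => rfl
  | cons p π ih =>
      rw [List.reverse_cons, permAtom_append]
      show swap p (permAtom π _) = a
      show swap p (permAtom π (permAtom π.reverse (swap p a))) = a
      rw [ih, swap_invol]

lemma permAtom_reverse_left (π : Perm) (a : Atom) :
    permAtom π.reverse (permAtom π a) = a := by
  have := permAtom_reverse_right π.reverse a
  rwa [List.reverse_reverse] at this

lemma ds_empty_eq {π π' : Perm} (h : ds π π' = ∅) (a : Atom) :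
    permAtom π a = permAtom π' a := by
  by_contra hc
  exact absurd (Set.eq_empty_iff_forall_notMem.mp h a) (by simpa [ds] using hc)

lemma ds_empty_reverse_eq {π π' : Perm} (h : ds π π' = ∅) (a : Atom) :
    permAtom π.reverse a = permAtom π'.reverse a := by
  have : permAtom π'.reverse (permAtom π' (permAtom π.reverse a)) =
      permAtom π'.reverse a := by
    rw [← ds_empty_eq h, permAtom_reverse_right]
  rwa [permAtom_reverse_left] at this

lemma fresh_weak {Γ : Env} {a : Atom} {t t' : Trm}
    (hf : fresh Γ a t) (hw : weak t t') : fresh Γ a t' := by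
  induction hw generalizing a with
  | unit => exact hf
  | atom => exact hf
  | fn _ ih => cases hf with | fn h => exact .fn (ih h)
  | pair _ _ ih₁ ih₂ => cases hf with | pair h₁ h₂ => exact .pair (ih₁ h₁) (ih₂ h₂)
  | abs _ ih =>
      cases hf with
      | abs₁ => exact .abs₁
      | abs₂ hne h => exact .abs₂ hne (ih h)
  | susp hds =>
      cases hf with
      | susp h => exact .susp (by rwa [← ds_empty_reverse_eq hds])

lemma weak_perm {t t' : Trm} (π : Perm) (hw : weak t t') :
    weak (permTrm π t) (permTrm π t') := by
  induction hw with
  | unit => exact .unit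
  | atom => exact .atom
  | fn _ ih => exact .fn ih
  | pair _ _ ih₁ ih₂ => exact .pair ih₁ ih₂
  | abs _ ih => exact .abs ih
  | susp hds =>
      refine .susp (Set.eq_empty_iff_forall_notMem.mpr fun a ha => ?_)
      apply ha
      show permAtom (π ++ _) a = permAtom (π ++ _) a
      rw [permAtom_append, permAtom_append, ds_empty_eq hds]

theorem equ_weak (Γ : Env) (t₁ t₂ t₃ : Trm)
    (h₁ : equ Γ t₁ t₂) (h₂ : weak t₂ t₃) : equ Γ t₁ t₃ := by
  induction h₁ generalizing t₃ with
  | unit => cases h₂; exact .unit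
  | atom => cases h₂; exact .atom
  | pair _ _ ih₁ ih₂ =>
      cases h₂ with | pair w₁ w₂ => exact .pair (ih₁ _ w₁) (ih₂ _ w₂)
  | fn _ ih => cases h₂ with | fn w => exact .fn (ih _ w)
  | abs₁ _ ih => cases h₂ with | abs w => exact .abs₁ (ih _ w)
  | abs₂ hne hf _ ih =>
      cases h₂ with
      | abs w => exact .abs₂ hne (fresh_weak hf w) (ih _ (weak_perm _ w))
  | susp h =>
      cases h₂ with
      | susp hds =>
          refine .susp fun c hc => h c ?_
          simp only [ds, Set.mem_setOf_eq] at hc ⊢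
          rwa [← ds_empty_eq hds] at hc
end
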